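/- arXiv:1808.09177 — 8 statements merged into one kernel-verified Lean document; each statement's English description precedes it below -/
import Mathlib

section
/- For any collection of n unit-norm vectors b_1,...,b_n in C^d with n ≥ d, the sum over all pairs (i,j) of |⟨b_i, b_j⟩|² is at least n²/d. -/
open Finset ComplexConjugate

/-- **Welch bound**: for any `n` unit-norm vectors in `ℂ^d` with `n ≥ d`, the sum of all
squared pairwise inner-product magnitudes is at least `n²/d`. -/
theorem welch_bound (d n : ℕ) (hn : d ≤ n)
    (b : Fin n → EuclideanSpace ℂ (Fin d)) (hb : ∀ i, ‖b i‖ = 1) :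
    (n : ℝ) ^ 2 / (d : ℝ) ≤ ∑ i, ∑ j, ‖(inner ℂ (b i) (b j) : ℂ)‖ ^ 2 := by
  classical
  set S : Fin d → Fin d → ℂ := fun k l => ∑ i, conj (b i k) * b i l with hS
  have e1 : ∀ z : ℂ, ((Complex.normSq z : ℝ) : ℂ) = conj z * z := by
    intro z; rw [← Complex.mul_conj]; ring
  have e2 : ∀ z : ℂ, ‖z‖ ^ 2 = Complex.normSq z := by
    intro z; rw [Complex.normSq_eq_norm_sq]
  -- unit norm in coordinates
  have hunit : ∀ i, ∑ k, ‖b i k‖ ^ 2 = 1 := by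
    intro i
    have h1 : (‖b i‖ : ℝ) ^ 2 = RCLike.re (inner ℂ (b i) (b i) : ℂ) :=
      InnerProductSpace.norm_sq_eq_re_inner (𝕜 := ℂ) (b i)
    rw [hb i, PiLp.inner_apply] at h1
    simp only [RCLike.inner_apply', RCLike.conj_mul, map_sum, ← RCLike.ofReal_pow,
      RCLike.ofReal_re] at h1
    rw [← h1]; norm_num
  -- inner product in coordinates
  have hP : ∀ i j, (inner ℂ (b i) (b j) : ℂ) = ∑ k, conj (b i k) * b j k := by
    intro i j
    simp [PiLp.inner_apply, RCLike.inner_apply]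
    exact Finset.sum_congr rfl fun k _ => mul_comm _ _
  -- generic reordering of quadruple sums
  have key : ∀ (f : Fin n → Fin n → Fin d → Fin d → ℂ),
      ∑ k, ∑ l, ∑ i, ∑ j, f i j k l = ∑ i, ∑ j, ∑ k, ∑ l, f i j k l := by
    intro f
    calc ∑ k, ∑ l, ∑ i, ∑ j, f i j k l
        = ∑ k, ∑ i, ∑ l, ∑ j, f i j k l :=
          Finset.sum_congr rfl (fun k _ => Finset.sum_comm)
      _ = ∑ i, ∑ k, ∑ l, ∑ j, f i j k l := Finset.sum_comm
      _ = ∑ i, ∑ k, ∑ j, ∑ l, f i j k l :=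
          Finset.sum_congr rfl (fun i _ => Finset.sum_congr rfl fun k _ =>
            Finset.sum_comm)
      _ = ∑ i, ∑ j, ∑ k, ∑ l, f i j k l :=
          Finset.sum_congr rfl (fun i _ => Finset.sum_comm)
  have swap_ij : ∀ (h : Fin n → Fin n → ℂ), ∑ i, ∑ j, h i j = ∑ i, ∑ j, h j i :=
    fun h => Finset.sum_comm
  -- main complex identity
  have hC : (∑ i, ∑ j, ((Complex.normSq (inner ℂ (b i) (b j) : ℂ) : ℝ) : ℂ))
      = ∑ k, ∑ l, ((Complex.normSq (S k l) : ℝ) : ℂ) := by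
    calc ∑ i, ∑ j, ((Complex.normSq (inner ℂ (b i) (b j) : ℂ) : ℝ) : ℂ)
        = ∑ i, ∑ j, conj (inner ℂ (b i) (b j) : ℂ) * (inner ℂ (b i) (b j) : ℂ) :=
          Finset.sum_congr rfl fun i _ => Finset.sum_congr rfl fun j _ => e1 _
      _ = ∑ i, ∑ j, ∑ l, ∑ k, (b i l * conj (b j l)) * (conj (b i k) * b j k) := by
          refine Finset.sum_congr rfl fun i _ => Finset.sum_congr rfl fun j _ => ?_
          rw [hP i j, map_sum, Finset.sum_mul_sum]
          refine Finset.sum_congr rfl fun l _ => Finset.sum_congr rfl fun k _ => ?_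
          simp only [map_mul, Complex.conj_conj, RingHomCompTriple.comp_apply,
            RingHom.id_apply]
      _ = ∑ l, ∑ k, ∑ i, ∑ j, (b i l * conj (b j l)) * (conj (b i k) * b j k) :=
          (key _).symm
      _ = ∑ k, ∑ l, ∑ i, ∑ j, (b i l * conj (b j l)) * (conj (b i k) * b j k) :=
          Finset.sum_comm
      _ = ∑ k, ∑ l, ∑ i, ∑ j, (b j l * conj (b i l)) * (conj (b j k) * b i k) :=
          Finset.sum_congr rfl fun k _ => Finset.sum_congr rfl fun l _ =>
            swap_ij _
      _ = ∑ k, ∑ l, conj (S k l) * S k l := by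
          refine Finset.sum_congr rfl fun k _ => Finset.sum_congr rfl fun l _ => ?_
          rw [hS]
          simp only [map_sum, map_mul, Complex.conj_conj, RingHomCompTriple.comp_apply,
            RingHom.id_apply]
          rw [Finset.sum_mul_sum]
          refine Finset.sum_congr rfl fun i _ => Finset.sum_congr rfl fun j _ => ?_
          ring
      _ = ∑ k, ∑ l, ((Complex.normSq (S k l) : ℝ) : ℂ) :=
          Finset.sum_congr rfl fun k _ => Finset.sum_congr rfl fun l _ => (e1 _).symm
  have hB : (∑ i, ∑ j, ‖(inner ℂ (b i) (b j) : ℂ)‖ ^ 2)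
      = ∑ k, ∑ l, ‖S k l‖ ^ 2 := by
    simp_rw [e2]
    exact_mod_cast hC
  -- the diagonal entries
  set f : Fin d → ℝ := fun k => ∑ i, ‖b i k‖ ^ 2 with hf
  have hdiag : ∀ k, S k k = ((f k : ℝ) : ℂ) := by
    intro k
    rw [hS, hf]
    push_cast
    refine Finset.sum_congr rfl fun i _ => ?_
    rw [RCLike.conj_mul]
    norm_cast
  have hfnonneg : ∀ k, 0 ≤ f k := fun k => Finset.sum_nonneg fun i _ => by positivity
  -- trace = n
  have htr : ∑ k, f k = n := by
    rw [hf]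
    rw [Finset.sum_comm]
    rw [show (∑ i, ∑ k, ‖b i k‖ ^ 2 : ℝ) = ∑ _i : Fin n, (1 : ℝ) from
      Finset.sum_congr rfl fun i _ => hunit i]
    simp
  -- Cauchy-Schwarz
  have hCS : (n : ℝ) ^ 2 ≤ (d : ℝ) * ∑ k, f k ^ 2 := by
    have := sq_sum_le_card_mul_sum_sq (s := Finset.univ) (f := f)
    rw [htr] at this
    simpa using this
  -- diagonal dominated by full sum
  have hdom : ∑ k, f k ^ 2 ≤ ∑ k, ∑ l, ‖S k l‖ ^ 2 := by
    refine Finset.sum_le_sum fun k _ => ?_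
    have h1 : f k ^ 2 = ‖S k k‖ ^ 2 := by
      rw [hdiag k, Complex.norm_real, Real.norm_eq_abs, abs_of_nonneg (hfnonneg k)]
    rw [h1]
    exact Finset.single_le_sum (f := fun l => ‖S k l‖ ^ 2)
      (fun l _ => by positivity) (Finset.mem_univ k)
  rw [hB]
  rcases Nat.eq_zero_or_pos d with hd | hd
  · subst hd
    simp only [Nat.cast_zero, div_zero]
    positivity
  · rw [div_le_iff₀ (by exact_mod_cast hd)]
    calc (n : ℝ) ^ 2 ≤ (d : ℝ) * ∑ k, f k ^ 2 := hCS
      _ ≤ (d : ℝ) * ∑ k, ∑ l, ‖S k l‖ ^ 2 :=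
          mul_le_mul_of_nonneg_left hdom (by positivity)
      _ = (∑ k, ∑ l, ‖S k l‖ ^ 2) * d := mul_comm _ _
end

section
/- Let φ_1,...,φ_K be unit-norm vectors in C^{N_p} with K ≥ N_p, and define the K×K Gram-type matrix Φ̄ with entries Φ̄_{ij} = |⟨φ_i, φ_j⟩|². Then the spectral radius of Φ̄ is at least K/N_p. -/
/-- Spectral radius of a real square matrix: the largest absolute value of a
(complex) eigenvalue. -/
noncomputable def specRad {n : ℕ} (A : Matrix (Fin n) (Fin n) ℝ) : ℝ :=
  sSup {r : ℝ | ∃ z ∈ spectrum ℂ (A.map (fun x => (x : ℂ))), r = ‖z‖}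

/-- The squared-correlation (Gram-type) matrix `Φ̄_{ij} = |⟨φ_i, φ_j⟩|²`. -/
noncomputable def corrMat {K Np : ℕ} (φ : Fin K → EuclideanSpace ℂ (Fin Np)) :
    Matrix (Fin K) (Fin K) ℝ :=
  fun i j => ‖(inner ℂ (φ i) (φ j) : ℂ)‖ ^ 2

open Matrix in
/-- Welch-bound step: the total sum of squared correlations is at least `K²/Np`. -/
lemma welch_sum_ge (K Np : ℕ) (hNp : 0 < Np)
    (φ : Fin K → EuclideanSpace ℂ (Fin Np)) (hφ : ∀ k, ‖φ k‖ = 1) :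
    (K : ℝ) ^ 2 / (Np : ℝ) ≤ ∑ i, ∑ j, corrMat φ i j := by
  classical
  set T : Matrix (Fin Np) (Fin Np) ℂ :=
    fun a b => ∑ k, φ k a * (starRingEnd ℂ) (φ k b) with hT
  -- total sum equals Frobenius norm squared of T
  have hinner : ∀ i j : Fin K,
      ((corrMat φ i j : ℝ) : ℂ)
        = ∑ a, ∑ b, (φ i a * (starRingEnd ℂ) (φ i b)) *
            ((starRingEnd ℂ) (φ j a) * φ j b) := by
    intro i j
    have h1 : ((corrMat φ i j : ℝ) : ℂ)
        = (starRingEnd ℂ) (inner ℂ (φ i) (φ j) : ℂ) * (inner ℂ (φ i) (φ j) : ℂ) := by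
      rw [corrMat]; push_cast
      exact (RCLike.conj_mul _).symm
    rw [h1, PiLp.inner_apply]
    simp only [RCLike.inner_apply]
    rw [map_sum, Finset.sum_mul]
    refine Finset.sum_congr rfl fun a _ => ?_
    rw [Finset.mul_sum]
    refine Finset.sum_congr rfl fun b _ => ?_
    simp only [_root_.map_mul, RingHomCompTriple.comp_apply, RingHom.id_apply,
      starRingEnd_self_apply]
    ring
  have hfro : ((∑ i, ∑ j, corrMat φ i j : ℝ) : ℂ)
      = ((∑ a, ∑ b, ‖T a b‖ ^ 2 : ℝ) : ℂ) := by
    push_cast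
    calc (∑ i, ∑ j, ((corrMat φ i j : ℝ) : ℂ))
        = ∑ i, ∑ j, ∑ a, ∑ b, (φ i a * (starRingEnd ℂ) (φ i b)) *
            ((starRingEnd ℂ) (φ j a) * φ j b) := by
          exact Finset.sum_congr rfl fun i _ => Finset.sum_congr rfl fun j _ => hinner i j
      _ = ∑ a, ∑ b, ∑ i, ∑ j, (φ i a * (starRingEnd ℂ) (φ i b)) *
            ((starRingEnd ℂ) (φ j a) * φ j b) := by
          refine ((Finset.sum_congr rfl fun i _ => Finset.sum_comm).trans ?_)
          refine (Finset.sum_comm).trans ?_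
          refine Finset.sum_congr rfl fun a _ => ?_
          refine ((Finset.sum_congr rfl fun i _ => Finset.sum_comm).trans ?_)
          exact Finset.sum_comm
      _ = ∑ a, ∑ b, ((‖T a b‖ : ℂ)) ^ 2 := by
          refine Finset.sum_congr rfl fun a _ => Finset.sum_congr rfl fun b _ => ?_
          rw [← Complex.mul_conj' (T a b)]
          rw [hT]
          simp only [map_sum, _root_.map_mul, starRingEnd_self_apply]
          rw [Finset.sum_mul_sum]
  have hfroR : (∑ i, ∑ j, corrMat φ i j : ℝ) = ∑ a, ∑ b, ‖T a b‖ ^ 2 :=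
    Complex.ofReal_injective hfro
  -- the diagonal of T
  set t : Fin Np → ℝ := fun a => ∑ k, ‖φ k a‖ ^ 2 with ht
  have hdiag : ∀ a, T a a = ((t a : ℝ) : ℂ) := by
    intro a
    rw [hT, ht]
    push_cast
    exact Finset.sum_congr rfl fun k _ => RCLike.mul_conj _
  have htrace : ∑ a, t a = (K : ℝ) := by
    have hunit : ∀ k : Fin K, ∑ a, ‖φ k a‖ ^ 2 = 1 := by
      intro k
      have h := hφ k
      rw [EuclideanSpace.norm_eq] at h
      have := congrArg (· ^ 2) h
      simpa [Real.sq_sqrt (Finset.sum_nonneg fun a _ => sq_nonneg _)] using this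
    calc ∑ a, t a = ∑ k : Fin K, ∑ a, ‖φ k a‖ ^ 2 := Finset.sum_comm
      _ = ∑ _k : Fin K, (1 : ℝ) := Finset.sum_congr rfl fun k _ => hunit k
      _ = (K : ℝ) := by simp
  -- Cauchy-Schwarz on the diagonal
  have hcs : (K : ℝ) ^ 2 ≤ (Np : ℝ) * ∑ a, (t a) ^ 2 := by
    have := _root_.sq_sum_le_card_mul_sum_sq (s := (Finset.univ : Finset (Fin Np))) (f := t)
    rw [htrace] at this
    simpa using this
  have hdle : ∑ a, (t a) ^ 2 ≤ ∑ a, ∑ b, ‖T a b‖ ^ 2 := by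
    refine Finset.sum_le_sum fun a _ => ?_
    have h1 : (t a) ^ 2 = ‖T a a‖ ^ 2 := by
      rw [hdiag a]
      simp [Real.norm_eq_abs, sq_abs]
    rw [h1]
    exact Finset.single_le_sum (f := fun b => ‖T a b‖ ^ 2)
      (fun b _ => sq_nonneg _) (Finset.mem_univ a)
  rw [div_le_iff₀ (by positivity : (0:ℝ) < (Np:ℝ)), hfroR]
  calc (K : ℝ) ^ 2 ≤ (Np : ℝ) * ∑ a, (t a) ^ 2 := hcs
    _ ≤ (Np : ℝ) * ∑ a, ∑ b, ‖T a b‖ ^ 2 := by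
        exact mul_le_mul_of_nonneg_left hdle (by positivity)
    _ = (∑ a, ∑ b, ‖T a b‖ ^ 2) * Np := by ring

open Matrix

/-- For `K ≥ N_p` unit-norm vectors in `ℂ^{N_p}`, the spectral radius of the squared
correlation matrix `Φ̄` is at least `K/N_p`. -/
theorem specRad_corrMat_ge (K Np : ℕ) (hNp : 0 < Np) (hK : Np ≤ K)
    (φ : Fin K → EuclideanSpace ℂ (Fin Np)) (hφ : ∀ k, ‖φ k‖ = 1) :
    (K : ℝ) / (Np : ℝ) ≤ specRad (corrMat φ) := by
  classical
  have hKpos : 0 < K := lt_of_lt_of_le hNp hK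
  have hKR : (0 : ℝ) < K := by exact_mod_cast hKpos
  have hNpR : (0 : ℝ) < Np := by exact_mod_cast hNp
  set A := corrMat φ with hA_def
  set Ac : Matrix (Fin K) (Fin K) ℂ := A.map (fun x => (x : ℂ)) with hAc
  have hsymm : ∀ i j, A i j = A j i := by
    intro i j
    simp only [hA_def, corrMat]
    rw [← inner_conj_symm (φ i) (φ j)]
    rw [RCLike.norm_conj]
  have hHerm : Ac.IsHermitian := by
    show Ac.conjTranspose = Ac
    ext i j
    simp only [Matrix.conjTranspose_apply, hAc, Matrix.map_apply]
    rw [Complex.star_def, Complex.conj_ofReal]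
    exact_mod_cast (hsymm i j).symm
  set lam : Fin K → ℝ := hHerm.eigenvalues with hlam_def
  obtain ⟨i0, -, hmax⟩ := Finset.exists_max_image (Finset.univ : Finset (Fin K)) lam
    ⟨⟨0, hKpos⟩, Finset.mem_univ _⟩
  set U : Matrix (Fin K) (Fin K) ℂ := (hHerm.eigenvectorUnitary : Matrix (Fin K) (Fin K) ℂ)
    with hU_def
  have hUU : U * star U = 1 := Matrix.mem_unitaryGroup_iff.mp (hHerm.eigenvectorUnitary).2
  set v : Fin K → ℂ := fun _ => 1 with hv
  set c : Fin K → ℂ := (star U) *ᵥ v with hc_def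
  set D : Matrix (Fin K) (Fin K) ℂ := Matrix.diagonal (RCLike.ofReal ∘ lam) with hD
  have hst : Ac = U * D * star U := hHerm.spectral_theorem
  have hstarc : star c = star v ᵥ* U := by
    rw [hc_def, Matrix.star_mulVec, Matrix.star_eq_conjTranspose, Matrix.conjTranspose_conjTranspose]
  -- quadratic form computed two ways
  have hq : dotProduct (star v) (Ac *ᵥ v)
      = ∑ i, star (c i) * ((RCLike.ofReal (lam i) : ℂ) * c i) := by
    rw [hst, ← Matrix.mulVec_mulVec, ← Matrix.mulVec_mulVec, dotProduct_mulVec, ← hstarc,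
      ← hc_def]
    simp only [dotProduct, hD, Matrix.mulVec_diagonal, Pi.star_apply, Function.comp_apply]
  have hL : dotProduct (star v) (Ac *ᵥ v) = ((∑ i, ∑ j, A i j : ℝ) : ℂ) := by
    simp only [dotProduct, Matrix.mulVec, hv, hAc, Matrix.map_apply, Pi.star_apply,
      star_one, one_mul, mul_one]
    push_cast
    rfl
  have hcK : ∑ i, star (c i) * c i = (K : ℂ) := by
    have h1 : ∑ i, star (c i) * c i = dotProduct (star c) c := rfl
    rw [h1, hstarc, hc_def, ← dotProduct_mulVec, Matrix.mulVec_mulVec, hUU,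
      Matrix.one_mulVec]
    simp [hv, dotProduct]
  -- extract real statements
  have hofReal : ∀ x : ℝ, (RCLike.ofReal x : ℂ) = (x : ℂ) := fun x => rfl
  have hterm : ∀ i, star (c i) * ((RCLike.ofReal (lam i) : ℂ) * c i)
      = (((lam i * ‖c i‖ ^ 2 : ℝ)) : ℂ) := by
    intro i
    rw [hofReal, Complex.star_def]
    push_cast
    rw [mul_comm ((starRingEnd ℂ) (c i)) _, mul_assoc, Complex.mul_conj']
  have hS0 : (∑ i, ∑ j, A i j : ℝ) = ∑ i, lam i * ‖c i‖ ^ 2 := by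
    apply Complex.ofReal_injective
    rw [← hL, hq]
    push_cast [hterm]
    rfl
  have hKsum : (K : ℝ) = ∑ i, ‖c i‖ ^ 2 := by
    apply Complex.ofReal_injective
    push_cast
    rw [← hcK]
    refine Finset.sum_congr rfl fun i _ => ?_
    rw [Complex.star_def, Complex.conj_mul']
  -- Rayleigh bound
  have hb : ∑ i, lam i * ‖c i‖ ^ 2 ≤ lam i0 * (K : ℝ) := by
    calc ∑ i, lam i * ‖c i‖ ^ 2
        ≤ ∑ i, lam i0 * ‖c i‖ ^ 2 := by
          refine Finset.sum_le_sum fun i _ => ?_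
          exact mul_le_mul_of_nonneg_right (hmax i (Finset.mem_univ i)) (by positivity)
      _ = lam i0 * ∑ i, ‖c i‖ ^ 2 := (Finset.mul_sum _ _ _).symm
      _ = lam i0 * (K : ℝ) := by rw [← hKsum]
  have hwelch := welch_sum_ge K Np hNp φ hφ
  have hlam0 : (K : ℝ) / (Np : ℝ) ≤ lam i0 := by
    have h1 : (K : ℝ) ^ 2 / (Np : ℝ) ≤ lam i0 * K := by
      calc (K : ℝ) ^ 2 / (Np : ℝ) ≤ ∑ i, ∑ j, A i j := hwelch
        _ = ∑ i, lam i * ‖c i‖ ^ 2 := hS0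
        _ ≤ lam i0 * K := hb
    rw [div_le_iff₀ hNpR] at h1 ⊢
    nlinarith
  -- conclude via membership in the spectrum
  have hmem : ((lam i0 : ℝ) : ℂ) ∈ spectrum ℂ Ac := by
    have h := hHerm.eigenvalues_mem_spectrum_real i0
    simpa using spectrum.algebraMap_mem ℂ h
  have hfin : {r : ℝ | ∃ z ∈ spectrum ℂ Ac, r = ‖z‖}.Finite := by
    have he : {r : ℝ | ∃ z ∈ spectrum ℂ Ac, r = ‖z‖}
        = (fun z => ‖z‖) '' (spectrum ℂ Ac) := by
      ext r
      simp [Set.mem_image, eq_comm]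
    rw [he]
    exact (Matrix.finite_spectrum Ac).image _
  unfold specRad
  rw [← hAc]
  refine le_trans ?_ (le_csSup hfin.bddAbove ⟨((lam i0 : ℝ) : ℂ), hmem, rfl⟩)
  calc (K : ℝ) / Np ≤ lam i0 := hlam0
    _ ≤ |lam i0| := le_abs_self _
    _ = ‖((lam i0 : ℝ) : ℂ)‖ := by rw [Complex.norm_real, Real.norm_eq_abs]
    _ = ‖((lam i0 : ℝ) : ℂ)‖ := rfl
end

section
/- If unit-norm vectors φ_1,...,φ_K in C^{N_p} (K ≥ N_p) attain the Welch bound with equality, i.e., Σ_i Σ_j |⟨φ_i,φ_j⟩|² = K²/N_p, then the frame is tight: Σ_{j=1}^K |⟨φ_i, φ_j⟩|² = K/N_p for every i. -/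
open ComplexConjugate Finset in
/-- Unit-norm vectors attaining the Welch bound with equality form a tight frame:
every row sum of the squared correlation matrix equals `K/N_p`. -/
theorem wbe_rowsum (K Np : ℕ) (hNp : 0 < Np) (hK : Np ≤ K)
    (φ : Fin K → EuclideanSpace ℂ (Fin Np)) (hφ : ∀ k, ‖φ k‖ = 1)
    (hwbe : ∑ i, ∑ j, ‖(inner ℂ (φ i) (φ j) : ℂ)‖ ^ 2 = (K : ℝ) ^ 2 / (Np : ℝ)) :
    ∀ i, ∑ j, ‖(inner ℂ (φ i) (φ j) : ℂ)‖ ^ 2 = (K : ℝ) / (Np : ℝ) := by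
  set g : Fin K → Fin K → ℂ := fun i j => inner ℂ (φ i) (φ j) with hg
  set S : Fin Np → Fin Np → ℂ := fun a b => ∑ j, φ j a * conj (φ j b) with hS
  have hinner : ∀ i j, g i j = ∑ a, conj (φ i a) * φ j a := by
    intro i j; simp [hg, PiLp.inner_apply, RCLike.inner_apply]
    exact Finset.sum_congr rfl fun _ _ => mul_comm _ _
  have hconjS : ∀ a b, conj (S a b) = S b a := by
    intro a b
    simp only [hS, map_sum, map_mul, Complex.conj_conj]
    exact Finset.sum_congr rfl fun j _ => mul_comm _ _
  have hunit : ∀ j, ∑ a, conj (φ j a) * φ j a = 1 := by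
    intro j
    have h1 : g j j = 1 := by
      show (inner ℂ (φ j) (φ j) : ℂ) = 1
      rw [inner_self_eq_norm_sq_to_K, hφ]; norm_num
    rw [← hinner, h1]
  -- squared norm as a double sum
  have hsq : ∀ i j, ((‖g i j‖ : ℂ)) ^ 2
      = ∑ a, ∑ b, (conj (φ i a) * φ i b) * (φ j a * conj (φ j b)) := by
    intro i j
    have h2 : conj (g i j) = ∑ b, φ i b * conj (φ j b) := by
      rw [hinner]; simp [map_sum]
    rw [← Complex.mul_conj', h2, hinner, Finset.sum_mul_sum]
    exact Finset.sum_congr rfl fun a _ => Finset.sum_congr rfl fun b _ => by ring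
  -- row sums in terms of S
  have hrow : ∀ i, (∑ j, ((‖g i j‖ : ℂ)) ^ 2)
      = ∑ a, ∑ b, conj (φ i a) * φ i b * S a b := by
    intro i
    simp only [hsq]
    rw [Finset.sum_comm]
    refine Finset.sum_congr rfl fun a _ => ?_
    rw [Finset.sum_comm]
    refine Finset.sum_congr rfl fun b _ => ?_
    rw [hS]
    simp only [Finset.mul_sum]
  -- total sum equals sum of |S a b|^2
  have htotal : ∑ a, ∑ b, S a b * conj (S a b) = ((K : ℂ) ^ 2 / (Np : ℂ)) := by
    have h1 : (∑ i, ∑ j, ((‖g i j‖ : ℂ)) ^ 2) = ∑ a, ∑ b, S a b * conj (S a b) := by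
      calc (∑ i, ∑ j, ((‖g i j‖:ℂ) ^ 2))
          = ∑ i, ∑ a, ∑ b, conj (φ i a) * φ i b * S a b :=
            Finset.sum_congr rfl fun i _ => hrow i
        _ = ∑ a, ∑ b, (∑ i, conj (φ i a) * φ i b) * S a b := by
            rw [Finset.sum_comm]
            refine Finset.sum_congr rfl fun a _ => ?_
            rw [Finset.sum_comm]
            exact Finset.sum_congr rfl fun b _ => (Finset.sum_mul _ _ _).symm
        _ = ∑ a, ∑ b, S a b * conj (S a b) := by
            refine Finset.sum_congr rfl fun a _ => Finset.sum_congr rfl fun b _ => ?_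
            rw [mul_comm]
            congr 1
            simp only [hS, map_sum, map_mul, Complex.conj_conj]
    have h2 : (∑ i, ∑ j, ((‖g i j‖ : ℂ)) ^ 2) = ((K : ℂ) ^ 2 / (Np : ℂ)) := by
      have := hwbe
      have hcast : ((∑ i, ∑ j, ‖g i j‖ ^ 2 : ℝ) : ℂ) = (((K:ℝ)^2/(Np:ℝ) : ℝ) : ℂ) := by
        exact_mod_cast congrArg (Complex.ofReal) hwbe
      push_cast at hcast
      exact hcast
    rw [← h1, h2]
  -- trace of S is K
  have htrace : ∑ a, S a a = (K : ℂ) := by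
    calc ∑ a, S a a = ∑ a, ∑ j, φ j a * conj (φ j a) := rfl
      _ = ∑ j, ∑ a, conj (φ j a) * φ j a := by
          rw [Finset.sum_comm]
          exact Finset.sum_congr rfl fun j _ => Finset.sum_congr rfl fun a _ => mul_comm _ _
      _ = ∑ j : Fin K, (1:ℂ) := Finset.sum_congr rfl fun j _ => hunit j
      _ = (K : ℂ) := by simp
  set c : ℝ := (K : ℝ) / (Np : ℝ) with hc
  have hNp' : (Np : ℂ) ≠ 0 := by exact_mod_cast hNp.ne'
  set T : Fin Np → Fin Np → ℂ := fun a b => S a b - (if a = b then (c:ℂ) else 0) with hT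
  have hTzero : ∀ a b, T a b = 0 := by
    have hsum : ∑ a, ∑ b, Complex.normSq (T a b) = 0 := by
      have key : ((∑ a, ∑ b, Complex.normSq (T a b) : ℝ) : ℂ) = 0 := by
        push_cast
        calc (∑ a, ∑ b, ((Complex.normSq (T a b) : ℂ)))
            = ∑ a, ∑ b, T a b * conj (T a b) := by
              refine Finset.sum_congr rfl fun a _ => Finset.sum_congr rfl fun b _ => ?_
              rw [Complex.mul_conj]
          _ = ∑ a, ∑ b, (S a b * conj (S a b)
                - (if a = b then (c:ℂ) else 0) * conj (S a b)
                - S a b * conj (if a = b then (c:ℂ) else 0)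
                + (if a = b then (c:ℂ) else 0) * conj (if a = b then (c:ℂ) else 0)) := by
              refine Finset.sum_congr rfl fun a _ => Finset.sum_congr rfl fun b _ => ?_
              simp only [hT, map_sub]
              ring
          _ = 0 := by
              simp only [Finset.sum_add_distrib, Finset.sum_sub_distrib]
              have e2 : ∑ a : Fin Np, ∑ b : Fin Np,
                  (if a = b then (c:ℂ) else 0) * conj (S a b) = (c:ℂ) * K := by
                simp only [ite_mul, zero_mul, Finset.sum_ite_eq, Finset.mem_univ, if_true]
                simp only [hconjS]
                rw [← Finset.mul_sum, htrace]
              have e3 : ∑ a : Fin Np, ∑ b : Fin Np,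
                  S a b * conj (if a = b then (c:ℂ) else 0) = (c:ℂ) * K := by
                simp only [apply_ite conj, map_zero, Complex.conj_ofReal,
                  mul_ite, mul_zero, Finset.sum_ite_eq, Finset.mem_univ, if_true]
                rw [← Finset.sum_mul, htrace]; ring
              have e4 : ∑ a : Fin Np, ∑ b : Fin Np,
                  (if a = b then (c:ℂ) else 0) * conj (if a = b then (c:ℂ) else 0)
                  = (c:ℂ)^2 * Np := by
                simp only [apply_ite conj, map_zero, Complex.conj_ofReal,
                  ite_mul, zero_mul, mul_ite, mul_zero, Finset.sum_ite_eq,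
                  Finset.mem_univ, if_true, Finset.sum_const, Finset.card_univ,
                  Fintype.card_fin, nsmul_eq_mul]
                ring
              rw [htotal, e2, e3, e4]
              have hcK : (c : ℂ) = (K : ℂ) / (Np : ℂ) := by
                rw [hc]; push_cast; ring
              rw [hcK]
              field_simp
              ring
      exact_mod_cast key
    intro a b
    have h1 := (Finset.sum_eq_zero_iff_of_nonneg (fun a _ =>
      Finset.sum_nonneg fun b _ => Complex.normSq_nonneg _)).mp hsum
    have h2 := (Finset.sum_eq_zero_iff_of_nonneg (fun b _ =>
      Complex.normSq_nonneg (T a b))).mp (h1 a (mem_univ a)) b (mem_univ b)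
    exact Complex.normSq_eq_zero.mp h2
  have hSdiag : ∀ a b, S a b = if a = b then (c:ℂ) else 0 := by
    intro a b
    have := hTzero a b
    rw [hT] at this
    linear_combination this
  -- conclude
  intro i
  have hcomplex : (∑ j, ((‖g i j‖ : ℂ)) ^ 2) = (c : ℂ) := by
    rw [hrow i]
    simp only [hSdiag, mul_ite, mul_zero, Finset.sum_ite_eq, Finset.mem_univ, if_true]
    have : ∀ a : Fin Np, conj (φ i a) * φ i a * (c:ℂ)
        = conj (φ i a) * φ i a * (c:ℂ) := fun _ => rfl
    rw [← Finset.sum_mul, hunit, one_mul]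
  have hreal : (∑ j, ‖g i j‖ ^ 2 : ℝ) = c := by
    have : ((∑ j, ‖g i j‖ ^ 2 : ℝ) : ℂ) = ((c:ℝ) : ℂ) := by push_cast; exact hcomplex
    exact_mod_cast this
  rw [hc] at hreal
  exact hreal
end

section
/- If unit-norm vectors φ_1,...,φ_K in C^{N_p} (K ≥ N_p) are WBE sequences, then the matrix Φ̄ with entries |⟨φ_i,φ_j⟩|² has spectral radius exactly K/N_p, and this is the minimum spectral radius over all choices of K unit-norm vectors in C^{N_p}. -/
open Matrix Complex Finset

section AuxLemmas

open Matrix in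
lemma mem_spec_of_eig {n : Type*} [Fintype n] [DecidableEq n] (M : Matrix n n ℂ) {z : ℂ}
    {v : n → ℂ} (hv : v ≠ 0) (h : M *ᵥ v = z • v) : z ∈ spectrum ℂ M := by
  rw [spectrum.mem_iff]
  intro hu
  rw [Matrix.isUnit_iff_isUnit_det, isUnit_iff_ne_zero] at hu
  apply hu
  rw [← Matrix.exists_mulVec_eq_zero_iff]
  refine ⟨v, hv, ?_⟩
  rw [Matrix.sub_mulVec, h]
  simp [Algebra.algebraMap_eq_smul_one, Matrix.smul_mulVec]

open Matrix in
lemma eig_of_mem_spec {n : Type*} [Fintype n] [DecidableEq n] (M : Matrix n n ℂ) {z : ℂ}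
    (h : z ∈ spectrum ℂ M) : ∃ v, v ≠ 0 ∧ M *ᵥ v = z • v := by
  rw [spectrum.mem_iff] at h
  rw [Matrix.isUnit_iff_isUnit_det, isUnit_iff_ne_zero, not_not,
    ← Matrix.exists_mulVec_eq_zero_iff] at h
  obtain ⟨v, hv, h⟩ := h
  refine ⟨v, hv, ?_⟩
  rw [Matrix.sub_mulVec, sub_eq_zero, Algebra.algebraMap_eq_smul_one,
    Matrix.smul_mulVec, Matrix.one_mulVec] at h
  rw [← h]

open Matrix in
lemma spec_norm_le_rowsum {n : Type*} [Fintype n] [DecidableEq n] (M : Matrix n n ℂ)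
    (C : ℝ) (hC : ∀ i, ∑ j, ‖M i j‖ ≤ C) {z : ℂ}
    (hz : ∃ v, v ≠ 0 ∧ M *ᵥ v = z • v) : ‖z‖ ≤ C := by
  obtain ⟨v, hv0, hv⟩ := hz
  have hne : (Finset.univ : Finset n).Nonempty := by
    by_contra h
    rw [Finset.not_nonempty_iff_eq_empty, Finset.univ_eq_empty_iff] at h
    exact hv0 (funext fun i => absurd (Finset.mem_univ i) (by simp [h.false i]))
  obtain ⟨i, -, hi⟩ := Finset.exists_max_image Finset.univ (fun i => ‖v i‖) hne
  have hvi : 0 < ‖v i‖ := by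
    obtain ⟨j, hj⟩ := Function.ne_iff.1 hv0
    have : 0 < ‖v j‖ := by simpa [norm_pos_iff] using hj
    exact lt_of_lt_of_le this (hi j (Finset.mem_univ j))
  have key : ‖z‖ * ‖v i‖ ≤ C * ‖v i‖ := by
    have h1 : z * v i = ∑ j, M i j * v j := by
      have := congrFun hv i
      simp only [Matrix.mulVec, dotProduct, Pi.smul_apply, smul_eq_mul] at this
      rw [← this]
    calc ‖z‖ * ‖v i‖ = ‖z * v i‖ := (norm_mul _ _).symm
      _ = ‖∑ j, M i j * v j‖ := by rw [h1]
      _ ≤ ∑ j, ‖M i j * v j‖ := norm_sum_le _ _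
      _ ≤ ∑ j, ‖M i j‖ * ‖v i‖ := by
          refine Finset.sum_le_sum fun j _ => ?_
          rw [norm_mul]
          exact mul_le_mul_of_nonneg_left (hi j (Finset.mem_univ j)) (norm_nonneg _)
      _ = (∑ j, ‖M i j‖) * ‖v i‖ := by rw [Finset.sum_mul]
      _ ≤ C * ‖v i‖ := mul_le_mul_of_nonneg_right (hC i) (norm_nonneg _)
  exact le_of_mul_le_mul_right key hvi

lemma inner_formula {K Np : ℕ} (ψ : Fin K → EuclideanSpace ℂ (Fin Np)) (i j : Fin K) :
    (inner ℂ (ψ i) (ψ j) : ℂ) = ∑ a, (starRingEnd ℂ) (ψ i a) * ψ j a := by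
  simp [PiLp.inner_apply, RCLike.inner_apply, mul_comm]

lemma normsq_inner_eq {K Np : ℕ} (ψ : Fin K → EuclideanSpace ℂ (Fin Np)) (i j : Fin K) :
    ((‖(inner ℂ (ψ i) (ψ j) : ℂ)‖ : ℂ) ^ 2)
      = ∑ a, ∑ b, (ψ i a * (starRingEnd ℂ) (ψ i b)) * ((starRingEnd ℂ) (ψ j a) * ψ j b) := by
  rw [← Complex.mul_conj' (inner ℂ (ψ i) (ψ j)), inner_formula, map_sum, Finset.sum_mul_sum,
    Finset.sum_comm]
  refine Finset.sum_congr rfl fun a _ => Finset.sum_congr rfl fun b _ => ?_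
  simp only [_root_.map_mul, starRingEnd_self_apply]
  ring

lemma core {K Np : ℕ} (ψ : Fin K → EuclideanSpace ℂ (Fin Np)) :
    (∑ a, ∑ b, (∑ j, ψ j a * (starRingEnd ℂ) (ψ j b)) *
        (starRingEnd ℂ) (∑ j, ψ j a * (starRingEnd ℂ) (ψ j b)))
      = ↑(∑ i, ∑ j, ‖(inner ℂ (ψ i) (ψ j) : ℂ)‖ ^ 2) := by
  push_cast
  calc ∑ a, ∑ b, (∑ j, ψ j a * (starRingEnd ℂ) (ψ j b)) *
        (starRingEnd ℂ) (∑ j, ψ j a * (starRingEnd ℂ) (ψ j b))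
      = ∑ a, ∑ b, ∑ i, ∑ j, (ψ i a * (starRingEnd ℂ) (ψ i b)) *
          ((starRingEnd ℂ) (ψ j a) * ψ j b) := by
        refine Finset.sum_congr rfl fun a _ => Finset.sum_congr rfl fun b _ => ?_
        rw [map_sum, Finset.sum_mul_sum]
        simp only [_root_.map_mul, starRingEnd_self_apply]
    _ = ∑ a, ∑ i, ∑ b, ∑ j, (ψ i a * (starRingEnd ℂ) (ψ i b)) *
          ((starRingEnd ℂ) (ψ j a) * ψ j b) :=
        Finset.sum_congr rfl fun a _ => Finset.sum_comm
    _ = ∑ i, ∑ a, ∑ b, ∑ j, (ψ i a * (starRingEnd ℂ) (ψ i b)) *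
          ((starRingEnd ℂ) (ψ j a) * ψ j b) := Finset.sum_comm
    _ = ∑ i, ∑ a, ∑ j, ∑ b, (ψ i a * (starRingEnd ℂ) (ψ i b)) *
          ((starRingEnd ℂ) (ψ j a) * ψ j b) :=
        Finset.sum_congr rfl fun i _ => Finset.sum_congr rfl fun a _ => Finset.sum_comm
    _ = ∑ i, ∑ j, ∑ a, ∑ b, (ψ i a * (starRingEnd ℂ) (ψ i b)) *
          ((starRingEnd ℂ) (ψ j a) * ψ j b) :=
        Finset.sum_congr rfl fun i _ => Finset.sum_comm
    _ = ∑ i, ∑ j, ((‖(inner ℂ (ψ i) (ψ j) : ℂ)‖ : ℂ) ^ 2) :=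
        Finset.sum_congr rfl fun i _ => Finset.sum_congr rfl fun j _ => (normsq_inner_eq ψ i j).symm

lemma diag_S {K Np : ℕ} (ψ : Fin K → EuclideanSpace ℂ (Fin Np)) (a : Fin Np) :
    (∑ j, ψ j a * (starRingEnd ℂ) (ψ j a)) = ((∑ j, ‖ψ j a‖ ^ 2 : ℝ) : ℂ) := by
  push_cast
  exact Finset.sum_congr rfl fun j _ => Complex.mul_conj' _

lemma trace_S {K Np : ℕ} (ψ : Fin K → EuclideanSpace ℂ (Fin Np)) (hψ : ∀ k, ‖ψ k‖ = 1) :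
    ∑ a, ∑ j, ψ j a * (starRingEnd ℂ) (ψ j a) = (K : ℂ) := by
  rw [Finset.sum_comm]
  have : ∀ j : Fin K, ∑ a, ψ j a * (starRingEnd ℂ) (ψ j a) = 1 := by
    intro j
    have h := inner_formula ψ j j
    rw [inner_self_eq_norm_sq_to_K, hψ j] at h
    simpa [mul_comm] using h.symm
  simp [this]

lemma norm_coord_sq_sum {Np : ℕ} (x : EuclideanSpace ℂ (Fin Np)) :
    ∑ a, ‖x a‖ ^ 2 = ‖x‖ ^ 2 := by
  rw [EuclideanSpace.norm_eq]
  rw [Real.sq_sqrt (Finset.sum_nonneg fun a _ => sq_nonneg _)]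

/-- Welch bound. -/
lemma welch_bound_s6 {K Np : ℕ} (hNp : 0 < Np) (ψ : Fin K → EuclideanSpace ℂ (Fin Np))
    (hψ : ∀ k, ‖ψ k‖ = 1) :
    (K : ℝ) ^ 2 / (Np : ℝ) ≤ ∑ i, ∑ j, ‖(inner ℂ (ψ i) (ψ j) : ℂ)‖ ^ 2 := by
  set d : Fin Np → ℝ := fun a => ∑ j, ‖ψ j a‖ ^ 2 with hd
  have hdnn : ∀ a, 0 ≤ d a := fun a => Finset.sum_nonneg fun j _ => sq_nonneg _
  have hdsum : ∑ a, d a = (K : ℝ) := by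
    rw [hd]
    calc ∑ a, ∑ j, ‖ψ j a‖ ^ 2 = ∑ j, ∑ a, ‖ψ j a‖ ^ 2 := Finset.sum_comm
      _ = ∑ _j : Fin K, (1:ℝ) := Finset.sum_congr rfl fun j _ => by
            rw [norm_coord_sq_sum, hψ j, one_pow]
      _ = (K : ℝ) := by simp
  -- total = Frobenius norm squared of S
  have htot : ∑ i, ∑ j, ‖(inner ℂ (ψ i) (ψ j) : ℂ)‖ ^ 2
      = ∑ a, ∑ b, ‖∑ j, ψ j a * (starRingEnd ℂ) (ψ j b)‖ ^ 2 := by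
    have h := core ψ
    have h2 : (∑ a, ∑ b, (∑ j, ψ j a * (starRingEnd ℂ) (ψ j b)) *
        (starRingEnd ℂ) (∑ j, ψ j a * (starRingEnd ℂ) (ψ j b)))
        = ((∑ a, ∑ b, ‖∑ j, ψ j a * (starRingEnd ℂ) (ψ j b)‖ ^ 2 : ℝ) : ℂ) := by
      push_cast
      exact Finset.sum_congr rfl fun a _ => Finset.sum_congr rfl fun b _ =>
        Complex.mul_conj' _
    rw [h2] at h
    exact_mod_cast h.symm
  have hdiagle : ∑ a, (d a) ^ 2 ≤ ∑ a, ∑ b, ‖∑ j, ψ j a * (starRingEnd ℂ) (ψ j b)‖ ^ 2 := by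
    refine Finset.sum_le_sum fun a _ => ?_
    have : (d a) ^ 2 = ‖∑ j, ψ j a * (starRingEnd ℂ) (ψ j a)‖ ^ 2 := by
      rw [diag_S]
      rw [Complex.norm_real, Real.norm_of_nonneg (hdnn a)]
    rw [this]
    exact Finset.single_le_sum (f := fun b => ‖∑ j, ψ j a * (starRingEnd ℂ) (ψ j b)‖ ^ 2)
      (fun b _ => sq_nonneg _) (Finset.mem_univ a)
  have hcs : (K : ℝ) ^ 2 ≤ (Np : ℝ) * ∑ a, (d a) ^ 2 := by
    have := sq_sum_le_card_mul_sum_sq (s := (Finset.univ : Finset (Fin Np))) (f := d)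
    rw [hdsum] at this
    simpa using this
  rw [htot]
  rw [div_le_iff₀ (by positivity)]
  calc (K:ℝ)^2 ≤ (Np:ℝ) * ∑ a, (d a)^2 := hcs
    _ ≤ (Np:ℝ) * ∑ a, ∑ b, ‖∑ j, ψ j a * (starRingEnd ℂ) (ψ j b)‖ ^ 2 := by
        exact mul_le_mul_of_nonneg_left hdiagle (by positivity)
    _ = _ := mul_comm _ _
lemma S_eq_scaled_id {K Np : ℕ} (hNp : 0 < Np) (ψ : Fin K → EuclideanSpace ℂ (Fin Np))
    (hψ : ∀ k, ‖ψ k‖ = 1)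
    (hwbe : ∑ i, ∑ j, ‖(inner ℂ (ψ i) (ψ j) : ℂ)‖ ^ 2 = (K : ℝ) ^ 2 / (Np : ℝ)) :
    ∀ a b, (∑ j, ψ j a * (starRingEnd ℂ) (ψ j b))
      = if a = b then (((K : ℝ) / (Np : ℝ) : ℝ) : ℂ) else 0 := by
  set c : ℂ := (((K : ℝ) / (Np : ℝ) : ℝ) : ℂ) with hc
  set Sm : Fin Np → Fin Np → ℂ := fun a b => ∑ j, ψ j a * (starRingEnd ℂ) (ψ j b) with hSm
  set δ : Fin Np → Fin Np → ℂ := fun a b => if a = b then c else 0 with hδ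
  have hconj : ∀ a b, (starRingEnd ℂ) (Sm a b) = Sm b a := by
    intro a b
    rw [hSm, map_sum]
    exact Finset.sum_congr rfl fun j _ => by simp [mul_comm]
  have hcc : (starRingEnd ℂ) c = c := Complex.conj_ofReal _
  have htr : ∑ a, Sm a a = (K : ℂ) := trace_S ψ hψ
  have h1 : ∑ a, ∑ b, Sm a b * (starRingEnd ℂ) (Sm a b) = (((K : ℝ) ^ 2 / (Np : ℝ) : ℝ) : ℂ) := by
    rw [hSm]
    rw [core ψ, hwbe]
  have h2 : ∑ a, ∑ b, Sm a b * (starRingEnd ℂ) (δ a b) = (K : ℂ) * c := by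
    have : ∀ a, ∑ b, Sm a b * (starRingEnd ℂ) (δ a b) = Sm a a * c := by
      intro a
      rw [hδ]
      simp only [apply_ite (starRingEnd ℂ), map_zero, hcc, mul_ite, mul_zero]
      simp [Finset.sum_ite_eq]
    rw [Finset.sum_congr rfl fun a _ => this a, ← Finset.sum_mul, htr]
  have h3 : ∑ a, ∑ b, δ a b * (starRingEnd ℂ) (Sm a b) = (K : ℂ) * c := by
    have h3a : ∀ a, ∑ b, δ a b * (starRingEnd ℂ) (Sm a b) = c * Sm a a := by
      intro a
      rw [hδ]
      simp only [ite_mul, zero_mul]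
      rw [Finset.sum_ite_eq]
      simp [hconj]
    rw [Finset.sum_congr rfl fun a _ => h3a a, ← Finset.mul_sum, htr, mul_comm]
  have h4 : ∑ a, ∑ b, δ a b * (starRingEnd ℂ) (δ a b) = (Np : ℂ) * (c * c) := by
    have h4a : ∀ a : Fin Np, ∑ b, δ a b * (starRingEnd ℂ) (δ a b) = c * c := by
      intro a
      rw [hδ]
      simp only [apply_ite (starRingEnd ℂ), map_zero, hcc, ite_mul, zero_mul, mul_ite, mul_zero]
      simp [Finset.sum_ite_eq]
    rw [Finset.sum_congr rfl fun a _ => h4a a]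
    simp [mul_comm]
  have hTsum : ∑ a, ∑ b, (Sm a b - δ a b) * (starRingEnd ℂ) (Sm a b - δ a b) = 0 := by
    have hexp : ∀ a b, (Sm a b - δ a b) * (starRingEnd ℂ) (Sm a b - δ a b)
        = Sm a b * (starRingEnd ℂ) (Sm a b) - Sm a b * (starRingEnd ℂ) (δ a b)
          - δ a b * (starRingEnd ℂ) (Sm a b) + δ a b * (starRingEnd ℂ) (δ a b) := by
      intro a b
      rw [map_sub]
      ring
    calc ∑ a, ∑ b, (Sm a b - δ a b) * (starRingEnd ℂ) (Sm a b - δ a b)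
        = ∑ a, ∑ b, (Sm a b * (starRingEnd ℂ) (Sm a b) - Sm a b * (starRingEnd ℂ) (δ a b)
          - δ a b * (starRingEnd ℂ) (Sm a b) + δ a b * (starRingEnd ℂ) (δ a b)) :=
        Finset.sum_congr rfl fun a _ => Finset.sum_congr rfl fun b _ => hexp a b
      _ = (∑ a, ∑ b, Sm a b * (starRingEnd ℂ) (Sm a b))
          - (∑ a, ∑ b, Sm a b * (starRingEnd ℂ) (δ a b))
          - (∑ a, ∑ b, δ a b * (starRingEnd ℂ) (Sm a b))
          + (∑ a, ∑ b, δ a b * (starRingEnd ℂ) (δ a b)) := by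
        simp [Finset.sum_add_distrib, Finset.sum_sub_distrib]
      _ = 0 := by
        rw [h1, h2, h3, h4, hc]
        have hNp' : (Np : ℂ) ≠ 0 := Nat.cast_ne_zero.mpr hNp.ne'
        push_cast
        field_simp
        ring
  have hreal : ∑ a, ∑ b, ‖Sm a b - δ a b‖ ^ 2 = (0 : ℝ) := by
    have : ∑ a, ∑ b, (Sm a b - δ a b) * (starRingEnd ℂ) (Sm a b - δ a b)
        = ((∑ a, ∑ b, ‖Sm a b - δ a b‖ ^ 2 : ℝ) : ℂ) := by
      push_cast
      exact Finset.sum_congr rfl fun a _ => Finset.sum_congr rfl fun b _ =>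
        Complex.mul_conj' _
    rw [this] at hTsum
    exact_mod_cast hTsum
  intro a b
  have h0 : ‖Sm a b - δ a b‖ ^ 2 = 0 := by
    have nn : ∀ x ∈ (Finset.univ : Finset (Fin Np)), ∀ y ∈ (Finset.univ : Finset (Fin Np)),
        (0:ℝ) ≤ ‖Sm x y - δ x y‖ ^ 2 := fun _ _ _ _ => sq_nonneg _
    have houter := (Finset.sum_eq_zero_iff_of_nonneg
      (fun x _ => Finset.sum_nonneg (fun y _ => sq_nonneg (‖Sm x y - δ x y‖)))).1 hreal
      a (Finset.mem_univ a)
    exact (Finset.sum_eq_zero_iff_of_nonneg (fun y _ => sq_nonneg _)).1 houter b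
      (Finset.mem_univ b)
  have : Sm a b - δ a b = 0 := by
    rw [pow_eq_zero_iff (by norm_num), norm_eq_zero] at h0
    exact h0
  exact sub_eq_zero.1 this

lemma rowsum_eq {K Np : ℕ} (hNp : 0 < Np) (ψ : Fin K → EuclideanSpace ℂ (Fin Np))
    (hψ : ∀ k, ‖ψ k‖ = 1)
    (hwbe : ∑ i, ∑ j, ‖(inner ℂ (ψ i) (ψ j) : ℂ)‖ ^ 2 = (K : ℝ) ^ 2 / (Np : ℝ)) (i : Fin K) :
    ∑ j, ‖(inner ℂ (ψ i) (ψ j) : ℂ)‖ ^ 2 = (K : ℝ) / (Np : ℝ) := by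
  have hS := S_eq_scaled_id hNp ψ hψ hwbe
  set c : ℂ := (((K : ℝ) / (Np : ℝ) : ℝ) : ℂ) with hc
  have hconjS : ∀ a b, ∑ j, (starRingEnd ℂ) (ψ j a) * ψ j b
      = if a = b then c else 0 := by
    intro a b
    have h := congrArg (starRingEnd ℂ) (hS a b)
    rw [map_sum] at h
    simp only [_root_.map_mul, starRingEnd_self_apply, apply_ite (starRingEnd ℂ), map_zero,
      Complex.conj_ofReal] at h
    rw [show (starRingEnd ℂ) c = c from Complex.conj_ofReal _] at h
    exact h
  have hdiag : ∑ a, ψ i a * (starRingEnd ℂ) (ψ i a) = 1 := by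
    have h := inner_formula ψ i i
    rw [inner_self_eq_norm_sq_to_K, hψ i] at h
    have := h.symm
    rw [Finset.sum_congr rfl fun a _ => mul_comm ((starRingEnd ℂ) (ψ i a)) (ψ i a)] at this
    simpa using this
  have hcx : ∑ j, ((‖(inner ℂ (ψ i) (ψ j) : ℂ)‖ : ℂ) ^ 2) = c := by
    calc ∑ j, ((‖(inner ℂ (ψ i) (ψ j) : ℂ)‖ : ℂ) ^ 2)
        = ∑ j, ∑ a, ∑ b, (ψ i a * (starRingEnd ℂ) (ψ i b)) *
            ((starRingEnd ℂ) (ψ j a) * ψ j b) :=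
          Finset.sum_congr rfl fun j _ => normsq_inner_eq ψ i j
      _ = ∑ a, ∑ j, ∑ b, (ψ i a * (starRingEnd ℂ) (ψ i b)) *
            ((starRingEnd ℂ) (ψ j a) * ψ j b) := Finset.sum_comm
      _ = ∑ a, ∑ b, ∑ j, (ψ i a * (starRingEnd ℂ) (ψ i b)) *
            ((starRingEnd ℂ) (ψ j a) * ψ j b) :=
          Finset.sum_congr rfl fun a _ => Finset.sum_comm
      _ = ∑ a, ∑ b, (ψ i a * (starRingEnd ℂ) (ψ i b)) *
            ∑ j, (starRingEnd ℂ) (ψ j a) * ψ j b := by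
          refine Finset.sum_congr rfl fun a _ => Finset.sum_congr rfl fun b _ => ?_
          rw [Finset.mul_sum]
      _ = ∑ a, ∑ b, (ψ i a * (starRingEnd ℂ) (ψ i b)) * (if a = b then c else 0) := by
          refine Finset.sum_congr rfl fun a _ => Finset.sum_congr rfl fun b _ => ?_
          rw [hconjS a b]
      _ = ∑ a, (ψ i a * (starRingEnd ℂ) (ψ i a)) * c := by
          refine Finset.sum_congr rfl fun a _ => ?_
          simp [Finset.sum_ite_eq, mul_ite]
      _ = (∑ a, ψ i a * (starRingEnd ℂ) (ψ i a)) * c := by rw [Finset.sum_mul]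
      _ = c := by rw [hdiag, one_mul]
  have : ((∑ j, ‖(inner ℂ (ψ i) (ψ j) : ℂ)‖ ^ 2 : ℝ) : ℂ) = c := by
    push_cast
    exact hcx
  rw [hc] at this
  exact_mod_cast this


lemma real_spec_to_complex {n : Type*} [Fintype n] [DecidableEq n] (A : Matrix n n ℝ) {r : ℝ}
    (h : r ∈ spectrum ℝ A) : (r : ℂ) ∈ spectrum ℂ (A.map (fun x => (x : ℂ))) := by
  rw [spectrum.mem_iff] at h ⊢
  rw [Matrix.isUnit_iff_isUnit_det, isUnit_iff_ne_zero, not_not] at h ⊢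
  have hmap : (algebraMap ℂ (Matrix n n ℂ)) (r : ℂ) - A.map (fun x => (x : ℂ))
      = ((algebraMap ℝ (Matrix n n ℝ)) r - A).map (fun x => (x : ℂ)) := by
    ext i j
    simp [Algebra.algebraMap_eq_smul_one, Matrix.one_apply, apply_ite]
  rw [hmap]
  rw [show ((algebraMap ℝ (Matrix n n ℝ)) r - A).map (fun x => (x : ℂ))
      = Complex.ofRealHom.mapMatrix ((algebraMap ℝ (Matrix n n ℝ)) r - A) from
      rfl, ← RingHom.map_det]
  simpa using h

lemma exists_eigen_ge_avg {K : ℕ} (hK : 0 < K) (A : Matrix (Fin K) (Fin K) ℝ)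
    (hA : A.IsHermitian) :
    ∃ r ∈ spectrum ℝ A, ∑ i, ∑ j, A i j ≤ r * K := by
  classical
  set U : Matrix (Fin K) (Fin K) ℝ := (hA.eigenvectorUnitary : Matrix (Fin K) (Fin K) ℝ) with hU
  set μ : Fin K → ℝ := hA.eigenvalues with hμ
  set w : Fin K → ℝ := fun k => ∑ i, U i k with hw
  have horth : ∀ i j, ∑ k, U i k * U j k = if i = j then (1:ℝ) else 0 := by
    intro i j
    have h1 : U * star U = 1 := Matrix.mem_unitaryGroup_iff.mp hA.eigenvectorUnitary.2
    have := congrFun (congrFun h1 i) j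
    rw [Matrix.mul_apply, Matrix.one_apply] at this
    simpa [Matrix.star_apply] using this
  have hentry : ∀ i j, A i j = ∑ k, U i k * μ k * U j k := by
    intro i j
    conv_lhs => rw [hA.spectral_theorem, Unitary.conjStarAlgAut_apply]
    rw [Matrix.mul_apply]
    refine Finset.sum_congr rfl fun k _ => ?_
    rw [Matrix.mul_diagonal]
    simp only [Matrix.star_apply, star_trivial, hU, hμ,
      Matrix.IsHermitian.eigenvectorUnitary_apply, Function.comp_apply,
      RCLike.ofReal_real_eq_id, id_eq]
  have hwnorm : ∑ k, (w k) ^ 2 = (K : ℝ) := by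
    calc ∑ k, (w k) ^ 2 = ∑ k, ∑ i, ∑ j, U i k * U j k := by
          refine Finset.sum_congr rfl fun k _ => ?_
          rw [hw, sq, Finset.sum_mul_sum]
      _ = ∑ i, ∑ k, ∑ j, U i k * U j k := Finset.sum_comm
      _ = ∑ i, ∑ j, ∑ k, U i k * U j k :=
          Finset.sum_congr rfl fun i _ => Finset.sum_comm
      _ = ∑ i, ∑ j, if i = j then (1:ℝ) else 0 :=
          Finset.sum_congr rfl fun i _ => Finset.sum_congr rfl fun j _ => horth i j
      _ = (K : ℝ) := by simp [Finset.sum_ite_eq]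
  have hsum : ∑ i, ∑ j, A i j = ∑ k, μ k * (w k) ^ 2 := by
    calc ∑ i, ∑ j, A i j = ∑ i, ∑ j, ∑ k, U i k * μ k * U j k :=
          Finset.sum_congr rfl fun i _ => Finset.sum_congr rfl fun j _ => hentry i j
      _ = ∑ i, ∑ k, ∑ j, U i k * μ k * U j k :=
          Finset.sum_congr rfl fun i _ => Finset.sum_comm
      _ = ∑ k, ∑ i, ∑ j, U i k * μ k * U j k := Finset.sum_comm
      _ = ∑ k, μ k * (w k) ^ 2 := by
          refine Finset.sum_congr rfl fun k _ => ?_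
          calc ∑ i, ∑ j, U i k * μ k * U j k = ∑ i, U i k * μ k * w k :=
                Finset.sum_congr rfl fun i _ => by rw [← Finset.mul_sum]
            _ = ∑ i, U i k * (μ k * w k) :=
                Finset.sum_congr rfl fun i _ => by ring
            _ = w k * (μ k * w k) := by rw [← Finset.sum_mul]
            _ = μ k * (w k) ^ 2 := by ring
  obtain ⟨k0, -, hk0⟩ := Finset.exists_max_image Finset.univ μ ⟨⟨0, hK⟩, Finset.mem_univ _⟩
  refine ⟨μ k0, hA.eigenvalues_mem_spectrum_real k0, ?_⟩
  rw [hsum]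
  calc ∑ k, μ k * (w k) ^ 2 ≤ ∑ k, μ k0 * (w k) ^ 2 :=
        Finset.sum_le_sum fun k _ =>
          mul_le_mul_of_nonneg_right (hk0 k (Finset.mem_univ k)) (sq_nonneg _)
    _ = μ k0 * (K : ℝ) := by rw [← Finset.mul_sum, hwnorm]

end AuxLemmas

/-- For WBE sequences the squared correlation matrix has spectral radius exactly
`K/N_p`, and this value is the minimum spectral radius over all choices of `K`
unit-norm vectors in `ℂ^{N_p}`. -/
theorem specRad_corrMat_of_wbe (K Np : ℕ) (hNp : 0 < Np) (hK : Np ≤ K)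
    (φ : Fin K → EuclideanSpace ℂ (Fin Np)) (hφ : ∀ k, ‖φ k‖ = 1)
    (hwbe : ∑ i, ∑ j, ‖(inner ℂ (φ i) (φ j) : ℂ)‖ ^ 2 = (K : ℝ) ^ 2 / (Np : ℝ)) :
    specRad (corrMat φ) = (K : ℝ) / (Np : ℝ) ∧
      ∀ ψ : Fin K → EuclideanSpace ℂ (Fin Np), (∀ k, ‖ψ k‖ = 1) →
        specRad (corrMat φ) ≤ specRad (corrMat ψ) := by
  have hKpos : 0 < K := lt_of_lt_of_le hNp hK
  set c : ℝ := (K : ℝ) / (Np : ℝ) with hc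
  have hcpos : 0 < c := by positivity
  -- entries of corrMat are nonneg
  have hnn : ∀ (ψ : Fin K → EuclideanSpace ℂ (Fin Np)) i j, 0 ≤ corrMat ψ i j :=
    fun ψ i j => sq_nonneg _
  -- part 1 : specRad (corrMat φ) = c
  have hrow : ∀ i, ∑ j, corrMat φ i j = c := fun i => rowsum_eq hNp φ hφ hwbe i
  set Ac : Matrix (Fin K) (Fin K) ℂ := (corrMat φ).map (fun x => (x : ℂ)) with hAc
  have hones : (fun _ : Fin K => (1 : ℂ)) ≠ 0 := by
    intro h
    have := congrFun h ⟨0, hKpos⟩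
    simp at this
  have heig : Ac *ᵥ (fun _ => (1 : ℂ)) = (c : ℂ) • (fun _ => (1 : ℂ)) := by
    funext i
    simp only [hAc, Matrix.mulVec, dotProduct, Matrix.map_apply, mul_one,
      Pi.smul_apply, smul_eq_mul]
    rw [← Complex.ofReal_sum]
    rw [hrow i]
  have hmem : (c : ℂ) ∈ spectrum ℂ Ac := mem_spec_of_eig Ac hones heig
  have hub : ∀ z ∈ spectrum ℂ Ac, ‖z‖ ≤ c := by
    intro z hz
    refine spec_norm_le_rowsum Ac c (fun i => ?_) (eig_of_mem_spec Ac hz)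
    rw [← hrow i]
    refine le_of_eq (Finset.sum_congr rfl fun j _ => ?_)
    simp only [hAc, Matrix.map_apply, Complex.norm_real]
    exact Real.norm_of_nonneg (hnn φ i j)
  have hcE : c ∈ {r : ℝ | ∃ z ∈ spectrum ℂ Ac, r = ‖z‖} :=
    ⟨(c : ℂ), hmem, by rw [Complex.norm_real, Real.norm_of_nonneg hcpos.le]⟩
  have hbdd : BddAbove {r : ℝ | ∃ z ∈ spectrum ℂ Ac, r = ‖z‖} := by
    refine ⟨c, fun r hr => ?_⟩
    obtain ⟨z, hz, rfl⟩ := hr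
    exact hub z hz
  have part1 : specRad (corrMat φ) = c := by
    rw [specRad, ← hAc]
    refine le_antisymm (csSup_le ⟨c, hcE⟩ ?_) (le_csSup hbdd hcE)
    rintro r ⟨z, hz, rfl⟩
    exact hub z hz
  refine ⟨part1, fun ψ hψ => ?_⟩
  -- part 2 : minimality
  set B : Matrix (Fin K) (Fin K) ℝ := corrMat ψ with hB
  have hBherm : B.IsHermitian := by
    rw [Matrix.IsHermitian]
    ext i j
    simp only [Matrix.conjTranspose_apply, hB, corrMat, star_trivial]
    rw [← inner_conj_symm]
    rw [RCLike.norm_conj]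
  have hwelch : (K : ℝ) ^ 2 / (Np : ℝ) ≤ ∑ i, ∑ j, B i j := welch_bound_s6 hNp ψ hψ
  obtain ⟨r, hrspec, hrge⟩ := exists_eigen_ge_avg hKpos B hBherm
  have hrc : c ≤ r := by
    have h1 : (K : ℝ) ^ 2 / (Np : ℝ) ≤ r * K := le_trans hwelch hrge
    rw [hc]
    rw [div_le_iff₀ (by positivity : (0:ℝ) < (Np:ℝ))] at h1 ⊢
    have hK0 : (0:ℝ) < (K:ℝ) := by positivity
    nlinarith [h1]
  have hmem2 : ((r : ℂ)) ∈ spectrum ℂ (B.map (fun x => (x : ℂ))) :=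
    real_spec_to_complex B hrspec
  have hmem2' : ‖(r : ℂ)‖ ∈ {s : ℝ | ∃ z ∈ spectrum ℂ (B.map (fun x => (x : ℂ))), s = ‖z‖} :=
    ⟨(r : ℂ), hmem2, rfl⟩
  have hbdd2 : BddAbove {s : ℝ | ∃ z ∈ spectrum ℂ (B.map (fun x => (x : ℂ))), s = ‖z‖} := by
    refine ⟨∑ i, ∑ j, B i j, fun s hs => ?_⟩
    obtain ⟨z, hz, rfl⟩ := hs
    refine spec_norm_le_rowsum _ _ (fun i => ?_) (eig_of_mem_spec _ hz)
    have : ∑ j, ‖((B i j : ℝ) : ℂ)‖ = ∑ j, B i j := by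
      refine Finset.sum_congr rfl fun j _ => ?_
      rw [Complex.norm_real, Real.norm_of_nonneg (hnn ψ i j)]
    rw [show (∑ j, ‖(B.map (fun x => (x:ℂ))) i j‖) = ∑ j, ‖((B i j : ℝ) : ℂ)‖ from rfl, this]
    exact Finset.single_le_sum (f := fun i => ∑ j, B i j)
      (fun i _ => Finset.sum_nonneg fun j _ => hnn ψ i j) (Finset.mem_univ i)
  have : c ≤ specRad B := by
    rw [specRad]
    refine le_trans ?_ (le_csSup hbdd2 hmem2')
    rw [Complex.norm_real]
    exact le_trans hrc (le_abs_self r)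
  rw [part1]
  exact this
end

section
/- If the equal-error LMMSE estimation level e ∈ (0,1) is achievable for K users with pilot correlation matrix Φ̄ (i.e., ρ(Φ̄) < 1/(1−e)), and ρ(Φ̄) ≥ K/N_p with K > N_p, then e ≥ (K − N_p)/K; moreover for WBE sequences (ρ(Φ̄) = K/N_p) this bound is the infimum. -/
/-- Key equivalence: for `0 < Np < K` and `e' < 1`,
`K/Np < 1/(1-e') ↔ (K-Np)/K < e'`. -/
lemma key_iff (K Np : ℕ) (hNp : 0 < Np) (hK : Np < K) (e' : ℝ) (he1 : e' < 1) :
    (K : ℝ) / (Np : ℝ) < 1 / (1 - e') ↔ ((K : ℝ) - Np) / K < e' := by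
  have hNp' : (0 : ℝ) < Np := by exact_mod_cast hNp
  have hK' : (0 : ℝ) < K := by exact_mod_cast hNp.trans hK
  have h1e : (0 : ℝ) < 1 - e' := by linarith
  rw [div_lt_div_iff₀ hNp' h1e, div_lt_iff₀ hK']
  constructor <;> intro h <;> nlinarith

/-- If the equal LMMSE error level `e ∈ (0,1)` is achievable, i.e. `ρ(Φ̄) < 1/(1−e)`,
and `ρ(Φ̄) ≥ K/N_p` with `K > N_p`, then `e ≥ (K − N_p)/K`; moreover for WBE pilots,
where `ρ(Φ̄) = K/N_p`, the value `(K − N_p)/K` is the infimum of achievable errors. -/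
theorem lmmse_error_lower_bound (K Np : ℕ) (hNp : 0 < Np) (hK : Np < K)
    (Φ : Matrix (Fin K) (Fin K) ℝ) (hρ : (K : ℝ) / (Np : ℝ) ≤ specRad Φ)
    (e : ℝ) (he0 : 0 < e) (he1 : e < 1) (hach : specRad Φ < 1 / (1 - e)) :
    ((K : ℝ) - Np) / K ≤ e ∧
      (specRad Φ = (K : ℝ) / (Np : ℝ) →
        IsGLB {e' : ℝ | 0 < e' ∧ e' < 1 ∧ specRad Φ < 1 / (1 - e')}
          (((K : ℝ) - Np) / K)) := by
  have hNp' : (0 : ℝ) < Np := by exact_mod_cast hNp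
  have hK' : (0 : ℝ) < K := by exact_mod_cast hNp.trans hK
  have hKNp : (Np : ℝ) < K := by exact_mod_cast hK
  have hc0 : 0 < ((K : ℝ) - Np) / K := div_pos (by linarith) hK'
  have hc1 : ((K : ℝ) - Np) / K < 1 := by
    rw [div_lt_one hK']; linarith
  constructor
  · have := (key_iff K Np hNp hK e he1).mp (lt_of_le_of_lt hρ hach)
    linarith
  · intro hspec
    have hset : {e' : ℝ | 0 < e' ∧ e' < 1 ∧ specRad Φ < 1 / (1 - e')} =
        Set.Ioo (((K : ℝ) - Np) / K) 1 := by
      ext e'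
      simp only [Set.mem_setOf_eq, Set.mem_Ioo, hspec]
      constructor
      · rintro ⟨_, h1, h2⟩
        exact ⟨(key_iff K Np hNp hK e' h1).mp h2, h1⟩
      · rintro ⟨h1, h2⟩
        exact ⟨lt_trans hc0 h1, h2, (key_iff K Np hNp hK e' h2).mpr h1⟩
    rw [hset]
    exact isGLB_Ioo hc1
end

section
/- Under WBE pilots with row-sum K/N_p, for target LS error e with N_p(1+e) > K, the unique equal-error minimum power solution is μ_k = σ²/(N_p(1+e) − K) for every k; equivalently q_k = σ²/((N_p(1+e) − K) β_k). -/
open Finset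

/-- Under WBE pilots (correlation matrix with nonnegative entries, unit diagonal and
constant row sums `K/N_p`), for target LS error `e` with `N_p(1+e) > K`, the powers
`q_k` solve the equal-error fixed-point equations iff
`q_k = σ²/((N_p(1+e) − K) β_k)` for every `k` (i.e. `μ_k = β_k q_k` is constant). -/
theorem wbe_ls_optimal_powers (K Np : ℕ) (hNp : 0 < Np) (hK : Np ≤ K)
    (Φ : Matrix (Fin K) (Fin K) ℝ) (hnn : ∀ i j, 0 ≤ Φ i j)
    (hdiag : ∀ k, Φ k k = 1) (hrow : ∀ k, ∑ j, Φ k j = (K : ℝ) / Np)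
    (σ2 : ℝ) (hσ : 0 < σ2) (e : ℝ) (he : (K : ℝ) < Np * (1 + e))
    (β q : Fin K → ℝ) (hβ : ∀ k, 0 < β k) :
    (∀ k, ∑ j ∈ univ.erase k, Φ k j * (β j * q j) + σ2 / Np = e * (β k * q k)) ↔
      ∀ k, q k = σ2 / (((Np : ℝ) * (1 + e) - K) * β k) := by
  have hNp' : (0:ℝ) < Np := by exact_mod_cast hNp
  have hK' : (Np:ℝ) ≤ K := by exact_mod_cast hK
  set A : ℝ := (Np:ℝ) * (1+e) - K with hA
  have hApos : 0 < A := by simp [hA]; linarith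
  clear_value A
  have hrow' : ∀ i, ∑ j ∈ univ.erase i, Φ i j = (K:ℝ)/Np - 1 := by
    intro i
    have h1 := hrow i
    rw [← Finset.add_sum_erase univ _ (mem_univ i), hdiag i] at h1
    linarith
  have hKN : ((K:ℝ)/Np) * Np = K := div_mul_cancel₀ _ (ne_of_gt hNp')
  constructor
  · intro h k
    set μ : Fin K → ℝ := fun j => β j * q j with hμ
    obtain ⟨k0, -, hk0⟩ := Finset.exists_max_image univ μ ⟨k, mem_univ k⟩
    obtain ⟨k1, -, hk1⟩ := Finset.exists_min_image univ μ ⟨k, mem_univ k⟩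
    have hmax : μ k0 ≤ σ2 / A := by
      have h0 := h k0
      have hle : ∑ j ∈ univ.erase k0, Φ k0 j * μ j
          ≤ ∑ j ∈ univ.erase k0, Φ k0 j * μ k0 :=
        Finset.sum_le_sum fun j _ =>
          mul_le_mul_of_nonneg_left (hk0 j (mem_univ j)) (hnn k0 j)
      rw [← Finset.sum_mul, hrow' k0] at hle
      have h2 : e * μ k0 ≤ ((K:ℝ)/Np - 1) * μ k0 + σ2/Np := by
        rw [← h0]; linarith
      have h3 : σ2 / Np * Np = σ2 := div_mul_cancel₀ _ (ne_of_gt hNp')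
      have h4 := mul_le_mul_of_nonneg_right h2 hNp'.le
      have h5 : (((K:ℝ)/Np - 1) * μ k0 + σ2/Np) * Np = ((K:ℝ) - Np) * μ k0 + σ2 := by
        field_simp
      have key : A * μ k0 ≤ σ2 := by rw [hA]; nlinarith
      rw [le_div_iff₀ hApos]; linarith
    have hmin : σ2 / A ≤ μ k1 := by
      have h0 := h k1
      have hle : ∑ j ∈ univ.erase k1, Φ k1 j * μ k1
          ≤ ∑ j ∈ univ.erase k1, Φ k1 j * μ j :=
        Finset.sum_le_sum fun j _ =>
          mul_le_mul_of_nonneg_left (hk1 j (mem_univ j)) (hnn k1 j)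
      rw [← Finset.sum_mul, hrow' k1] at hle
      have h2 : ((K:ℝ)/Np - 1) * μ k1 + σ2/Np ≤ e * μ k1 := by
        rw [← h0]; linarith
      have h3 : σ2 / Np * Np = σ2 := div_mul_cancel₀ _ (ne_of_gt hNp')
      have h4 := mul_le_mul_of_nonneg_right h2 hNp'.le
      have h5 : (((K:ℝ)/Np - 1) * μ k1 + σ2/Np) * Np = ((K:ℝ) - Np) * μ k1 + σ2 := by
        field_simp
      have key : σ2 ≤ A * μ k1 := by rw [hA]; nlinarith
      rw [div_le_iff₀ hApos]; linarith
    have hμk : μ k = σ2 / A := by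
      have h1 := le_trans (hk0 k (mem_univ k)) hmax
      have h2 := le_trans hmin (hk1 k (mem_univ k))
      linarith
    have hβk := hβ k
    have : β k * q k = σ2 / A := hμk
    rw [eq_div_iff (by positivity)]
    rw [eq_div_iff (ne_of_gt hApos)] at this
    nlinarith
  · intro h k
    have hc : ∀ j, β j * q j = σ2 / A := by
      intro j
      rw [h j]
      field_simp
      exact div_self (hβ j).ne'
    simp only [hc]
    rw [← Finset.sum_mul, hrow' k]
    field_simp
    linear_combination hA
end

section
/- For the FFT-based pilots φ_k with entries (1/√N_p) e^{2πi·u_j(k−1)/K} (distinct u_j), for each fixed k one has Σ_{k'=1}^{K} |⟨φ_k, φ_{k'}⟩|² = K/N_p. -/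
/-- FFT-based pilot sequence: `N_p` distinct rows of the `K×K` DFT matrix, normalized
by `1/√N_p`. The `i`-th entry of `φ_k` is `(1/√N_p) e^{2πi·u_i·k/K}`. -/
noncomputable def fftPilot (K Np : ℕ) (u : Fin Np → Fin K) (k : Fin K) :
    EuclideanSpace ℂ (Fin Np) :=
  WithLp.toLp 2 (fun i => ((1 / Real.sqrt Np : ℝ) : ℂ) *
    Complex.exp (2 * Real.pi * Complex.I * ((u i : ℕ) : ℂ) * ((k : ℕ) : ℂ) / (K : ℂ)))

section FftAux
open Complex Finset

lemma sum_exp_zero (K : ℕ) (hK : 0 < K) (d : ℤ) (hd : d ≠ 0) (hlt : d.natAbs < K) :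
    ∑ k' : Fin K, Complex.exp (2 * Real.pi * I * (d : ℂ) * (k' : ℕ) / K) = 0 := by
  have hK0 : (K : ℂ) ≠ 0 := Nat.cast_ne_zero.mpr hK.ne'
  set ζ : ℂ := Complex.exp (2 * Real.pi * I * d / K) with hζ
  have hterm : ∀ k' : Fin K, Complex.exp (2 * Real.pi * I * (d : ℂ) * (k' : ℕ) / K) = ζ ^ (k' : ℕ) := by
    intro k'
    rw [hζ, ← Complex.exp_nat_mul]
    congr 1; ring
  have hζK : ζ ^ K = 1 := by
    rw [hζ, ← Complex.exp_nat_mul]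
    have : (K : ℂ) * (2 * Real.pi * I * d / K) = d * (2 * Real.pi * I) := by
      field_simp
    rw [this, Complex.exp_int_mul_two_pi_mul_I]
  have hζ1 : ζ ≠ 1 := by
    intro h
    rw [hζ, Complex.exp_eq_one_iff] at h
    obtain ⟨n, hn⟩ := h
    have h2 : (2 * (Real.pi : ℂ) * I : ℂ) ≠ 0 := by
      simp [Real.pi_ne_zero, Complex.I_ne_zero, Complex.ofReal_ne_zero]
    have hn' : (2 * (Real.pi : ℂ) * I) * ((d : ℂ) / K) = (2 * (Real.pi : ℂ) * I) * n := by
      linear_combination hn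
    have hdK : (d : ℂ) / K = n := mul_left_cancel₀ h2 hn'
    have hdC : (d : ℂ) = n * K := by
      field_simp at hdK; linear_combination hdK
    have hdZ : d = n * K := by exact_mod_cast hdC
    have hn0 : n ≠ 0 := by rintro rfl; simp at hdZ; exact hd hdZ
    have : K ≤ d.natAbs := by
      rw [hdZ, Int.natAbs_mul, Int.natAbs_natCast]
      have h1 : 1 ≤ n.natAbs := Nat.one_le_iff_ne_zero.mpr (Int.natAbs_ne_zero.mpr hn0)
      calc K = 1 * K := (one_mul K).symm
        _ ≤ n.natAbs * K := Nat.mul_le_mul_right K h1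
    omega
  simp_rw [hterm]
  rw [Fin.sum_univ_eq_sum_range (fun n => ζ ^ n), geom_sum_eq hζ1, hζK]
  simp

lemma conj_exp_form (K : ℕ) (a b : ℂ) (ha : (starRingEnd ℂ) a = a) (hb : (starRingEnd ℂ) b = b) :
    (starRingEnd ℂ) (Complex.exp (2 * Real.pi * I * a * b / K)) =
      Complex.exp (-(2 * Real.pi * I * a * b / K)) := by
  rw [← Complex.exp_conj]
  congr 1
  rw [map_div₀, Complex.conj_natCast]
  simp only [map_mul, Complex.conj_I, Complex.conj_ofReal, map_ofNat, ha, hb]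
  ring

/-- Constant row-sum (tight frame) property of the FFT-based pilots: for every `k`,
`Σ_{k'} |⟨φ_k, φ_{k'}⟩|² = K/N_p`. -/
theorem fftPilot_rowsum (K Np : ℕ) (hNp : 0 < Np) (hK : 0 < K)
    (u : Fin Np → Fin K) (hu : Function.Injective u) (k : Fin K) :
    ∑ k', ‖(inner ℂ (fftPilot K Np u k) (fftPilot K Np u k') : ℂ)‖ ^ 2 =
      (K : ℝ) / (Np : ℝ) := by
  have hNp0 : (Np : ℂ) ≠ 0 := Nat.cast_ne_zero.mpr hNp.ne'
  have hK0 : (K : ℂ) ≠ 0 := Nat.cast_ne_zero.mpr hK.ne'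
  set X : Fin Np → Fin K → ℂ :=
    fun i k₂ => 2 * Real.pi * I * ((u i : ℕ) : ℂ) * ((((k₂ : ℕ)) : ℂ) - (((k : ℕ)) : ℂ)) / K
    with hX
  have hc : ((1 / Real.sqrt Np : ℝ) : ℂ) * ((1 / Real.sqrt Np : ℝ) : ℂ) = ((Np : ℂ))⁻¹ := by
    rw [← Complex.ofReal_mul]
    have : (1 / Real.sqrt Np : ℝ) * (1 / Real.sqrt Np) = (Np : ℝ)⁻¹ := by
      rw [div_mul_div_comm, Real.mul_self_sqrt (Nat.cast_nonneg Np)]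
      simp
    rw [this]; push_cast; ring
  have hterm : ∀ (k₂ : Fin K) (i : Fin Np),
      (starRingEnd ℂ) (fftPilot K Np u k i) * fftPilot K Np u k₂ i
        = ((Np : ℂ))⁻¹ * Complex.exp (X i k₂) := by
    intro k₂ i
    simp only [fftPilot, PiLp.toLp_apply, map_mul, Complex.conj_ofReal,
      conj_exp_form K ((u i : ℕ) : ℂ) ((k : ℕ) : ℂ) (Complex.conj_natCast _) (Complex.conj_natCast _)]
    rw [mul_mul_mul_comm, hc, ← Complex.exp_add, hX]
    congr 1
    ring
  have hinner : ∀ k₂ : Fin K,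
      (inner ℂ (fftPilot K Np u k) (fftPilot K Np u k₂) : ℂ)
        = ((Np : ℂ))⁻¹ * ∑ i : Fin Np, Complex.exp (X i k₂) := by
    intro k₂
    rw [PiLp.inner_apply]
    simp_rw [RCLike.inner_apply', hterm]
    rw [Finset.mul_sum]
  have hconjX : ∀ (j : Fin Np) (k₂ : Fin K),
      (starRingEnd ℂ) (Complex.exp (X j k₂)) = Complex.exp (-(X j k₂)) := by
    intro j k₂
    exact conj_exp_form K _ _ (Complex.conj_natCast _)
      (by rw [map_sub, Complex.conj_natCast, Complex.conj_natCast])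
  have hpair : ∀ i j : Fin Np,
      ∑ k₂ : Fin K, Complex.exp (X i k₂) * (starRingEnd ℂ) (Complex.exp (X j k₂))
        = if i = j then (K : ℂ) else 0 := by
    intro i j
    by_cases hij : i = j
    · subst hij
      simp [hconjX, ← Complex.exp_add]
    · simp only [hij, if_false]
      set d : ℤ := ((u i : ℕ) : ℤ) - ((u j : ℕ) : ℤ) with hd
      have hdne : d ≠ 0 := by
        rw [hd]
        intro h
        have : (u i : ℕ) = (u j : ℕ) := by omega
        exact hij (hu (Fin.val_injective this))
      have hdlt : d.natAbs < K := by
        have h1 := (u i).isLt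
        have h2 := (u j).isLt
        omega
      have hsplit : ∀ k₂ : Fin K,
          Complex.exp (X i k₂) * (starRingEnd ℂ) (Complex.exp (X j k₂))
            = Complex.exp (2 * Real.pi * I * (d : ℂ) * (k₂ : ℕ) / K) *
              Complex.exp (-(2 * Real.pi * I * (d : ℂ) * (k : ℕ) / K)) := by
        intro k₂
        rw [hconjX, ← Complex.exp_add, ← Complex.exp_add, hX]
        congr 1
        simp only [hd]
        push_cast
        field_simp
        ring
      simp_rw [hsplit]
      rw [← Finset.sum_mul, sum_exp_zero K hK d hdne hdlt, zero_mul]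
  -- pass to ℂ
  apply Complex.ofReal_injective
  push_cast
  calc (∑ k₂ : Fin K, ((‖(inner ℂ (fftPilot K Np u k) (fftPilot K Np u k₂) : ℂ)‖ : ℂ)) ^ 2)
      = ∑ k₂ : Fin K, (inner ℂ (fftPilot K Np u k) (fftPilot K Np u k₂) : ℂ) *
          (starRingEnd ℂ) (inner ℂ (fftPilot K Np u k) (fftPilot K Np u k₂) : ℂ) := by
        refine Finset.sum_congr rfl fun k₂ _ => ?_
        rw [Complex.mul_conj']
    _ = ∑ k₂ : Fin K, ((Np : ℂ))⁻¹ * ((Np : ℂ))⁻¹ *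
          ∑ i : Fin Np, ∑ j : Fin Np,
            Complex.exp (X i k₂) * (starRingEnd ℂ) (Complex.exp (X j k₂)) := by
        refine Finset.sum_congr rfl fun k₂ _ => ?_
        rw [hinner k₂, map_mul, map_inv₀, Complex.conj_natCast, map_sum,
          mul_mul_mul_comm, Finset.sum_mul_sum]
    _ = ((Np : ℂ))⁻¹ * ((Np : ℂ))⁻¹ *
          ∑ i : Fin Np, ∑ j : Fin Np, ∑ k₂ : Fin K,
            Complex.exp (X i k₂) * (starRingEnd ℂ) (Complex.exp (X j k₂)) := by
        rw [← Finset.mul_sum]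
        congr 1
        rw [Finset.sum_comm]
        exact Finset.sum_congr rfl fun i _ => Finset.sum_comm
    _ = ((Np : ℂ))⁻¹ * ((Np : ℂ))⁻¹ * ∑ i : Fin Np, ∑ j : Fin Np,
          (if i = j then (K : ℂ) else 0) := by
        rw [Finset.sum_congr rfl fun i _ => Finset.sum_congr rfl fun j _ => hpair i j]
    _ = (K : ℂ) / Np := by
        simp only [Finset.sum_ite_eq, Finset.mem_univ, if_true, Finset.sum_const,
          Finset.card_univ, Fintype.card_fin, nsmul_eq_mul]
        field_simp

end FftAux
end

section
/- Suppose positive reals μ_1,...,μ_K satisfy the equal-LS-error equations Σ_{j≠k} Φ̄_{kj} μ_j + σ²/N_p = e μ_k for all k, where Φ̄ is the correlation matrix (Φ̄_{kk}=1). If the errors were unequal with e_1 < e_2 = ... = e_K, then decreasing μ_1 strictly decreases e_j for all j ≥ 2 while the system remains feasible; hence the min-max error is attained with all per-user errors equal. -/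
open Finset

/-- Per-user LS channel estimation error
`e_k(μ) = (N_p Σ_{j≠k} Φ̄_{kj} μ_j + σ²)/(N_p μ_k)`. -/
noncomputable def lsErr (Np : ℕ) (σ2 : ℝ) {K : ℕ} (Φ : Matrix (Fin K) (Fin K) ℝ)
    (μ : Fin K → ℝ) (k : Fin K) : ℝ :=
  ((Np : ℝ) * ∑ j ∈ univ.erase k, Φ k j * μ j + σ2) / ((Np : ℝ) * μ k)

/-- If the per-user LS errors are unequal, with user `0` strictly below the common
error of all the other users, then the power `μ_0` of user `0` can be strictly
decreased so that the system stays feasible (all powers positive), every other user's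
error strictly decreases, and every error stays strictly below the former maximum:
hence the min-max error is attained only with all per-user errors equal. -/
theorem ls_minmax_equalizes (K Np : ℕ) (hNp : 0 < Np) (σ2 : ℝ) (hσ : 0 < σ2)
    (Φ : Matrix (Fin (K + 2)) (Fin (K + 2)) ℝ) (hnn : ∀ i j, 0 ≤ Φ i j)
    (hdiag : ∀ k, Φ k k = 1) (hcol : ∀ j, j ≠ 0 → 0 < Φ j 0)
    (μ : Fin (K + 2) → ℝ) (hμ : ∀ k, 0 < μ k)
    (hlt : lsErr Np σ2 Φ μ 0 < lsErr Np σ2 Φ μ 1)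
    (heq : ∀ j j', j ≠ 0 → j' ≠ 0 → lsErr Np σ2 Φ μ j = lsErr Np σ2 Φ μ j') :
    ∃ μ' : Fin (K + 2) → ℝ, (∀ k, 0 < μ' k) ∧ μ' 0 < μ 0 ∧
      (∀ k, k ≠ 0 → μ' k = μ k) ∧
      (∀ j, j ≠ 0 → lsErr Np σ2 Φ μ' j < lsErr Np σ2 Φ μ j) ∧
      (∀ j, lsErr Np σ2 Φ μ' j < lsErr Np σ2 Φ μ 1) := by
  have hNp' : (0:ℝ) < Np := by exact_mod_cast hNp
  have hc : 0 < μ 0 := hμ 0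
  set A : ℝ := (Np:ℝ) * ∑ j ∈ univ.erase (0 : Fin (K+2)), Φ 0 j * μ j + σ2 with hA
  have hApos : 0 < A := by
    have h : 0 ≤ ∑ j ∈ univ.erase (0 : Fin (K+2)), Φ 0 j * μ j :=
      Finset.sum_nonneg fun i _ => mul_nonneg (hnn _ _) (hμ i).le
    have := hNp'
    nlinarith
  have he0 : lsErr Np σ2 Φ μ 0 = A / ((Np:ℝ) * μ 0) := rfl
  set e1 := lsErr Np σ2 Φ μ 1 with he1
  have he0pos : 0 < lsErr Np σ2 Φ μ 0 := by rw [he0]; positivity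
  have he1pos : 0 < e1 := he0pos.trans hlt
  set t := A / ((Np:ℝ) * e1) with ht
  have htpos : 0 < t := by positivity
  have hAe : A = t * ((Np:ℝ) * e1) := by rw [ht]; field_simp
  have htc : t < μ 0 := by
    have h := hlt
    rw [he0, div_lt_iff₀ (by positivity)] at h
    rw [ht, div_lt_iff₀ (by positivity)]
    nlinarith
  set m := (μ 0 + t)/2 with hm
  have hmpos : 0 < m := by positivity
  have hmt : t < m := by rw [hm]; linarith
  have hmc : m < μ 0 := by rw [hm]; linarith
  set μ' : Fin (K+2) → ℝ := fun k => if k = 0 then m else μ k with hμ'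
  have hμ'0 : μ' 0 = m := by simp [hμ']
  have hμ'ne : ∀ k, k ≠ 0 → μ' k = μ k := by intro k hk; simp [hμ', hk]
  have hμ'pos : ∀ k, 0 < μ' k := by
    intro k; by_cases hk : k = 0
    · rw [hk, hμ'0]; exact hmpos
    · rw [hμ'ne k hk]; exact hμ k
  -- error of users j ≠ 0 strictly decreases
  have hdec : ∀ j : Fin (K+2), j ≠ 0 → lsErr Np σ2 Φ μ' j < lsErr Np σ2 Φ μ j := by
    intro j hj
    have hsum : ∑ i ∈ univ.erase j, Φ j i * μ' i < ∑ i ∈ univ.erase j, Φ j i * μ i := by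
      apply Finset.sum_lt_sum
      · intro i _
        by_cases hi : i = 0
        · subst hi; rw [hμ'0]
          exact mul_le_mul_of_nonneg_left hmc.le (hnn j 0)
        · rw [hμ'ne i hi]
      · exact ⟨0, Finset.mem_erase.mpr ⟨Ne.symm hj, Finset.mem_univ 0⟩, by
          rw [hμ'0]; exact mul_lt_mul_of_pos_left hmc (hcol j hj)⟩
    unfold lsErr
    rw [hμ'ne j hj]
    have hden : 0 < (Np:ℝ) * μ j := mul_pos hNp' (hμ j)
    exact (div_lt_div_iff_of_pos_right hden).mpr (by nlinarith)
  have h1ne : (1 : Fin (K+2)) ≠ 0 := one_ne_zero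
  -- error of user 0 stays below e1
  have h0 : lsErr Np σ2 Φ μ' 0 < e1 := by
    have hsum0 : ∑ i ∈ univ.erase (0 : Fin (K+2)), Φ 0 i * μ' i
        = ∑ i ∈ univ.erase (0 : Fin (K+2)), Φ 0 i * μ i := by
      apply Finset.sum_congr rfl
      intro i hi
      rw [hμ'ne i (Finset.mem_erase.mp hi).1]
    have : lsErr Np σ2 Φ μ' 0 = A / ((Np:ℝ) * m) := by
      unfold lsErr; rw [hsum0, hμ'0]
    rw [this, div_lt_iff₀ (by positivity)]
    nlinarith
  refine ⟨μ', hμ'pos, by rw [hμ'0]; exact hmc, hμ'ne, hdec, ?_⟩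
  intro j
  by_cases hj : j = 0
  · rw [hj]; exact h0
  · exact (hdec j hj).trans_le (le_of_eq (heq j 1 hj h1ne))
end
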